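/- arXiv:2106.05464 — 5 statements merged into one kernel-verified Lean document; each statement's English description precedes it below -/
import Mathlib

section
/- Let M be a von Neumann algebra with a faithful state φ, let T : M_m → M be a ucp map, put ψ := φ∘T, and let S : M → M_m be a ucp map satisfying ψ∘S = φ and ψ(x* S(y)) = φ(T(x)* y) for all x ∈ M_m, y ∈ M. If u ∈ M and v ∈ M_m are unitaries such that ‖T(v) − u‖_φ < ε for some ε > 0, then ‖S(u) − v‖_ψ² < 2ε and ‖T(S(u)) − u‖_φ < (2ε)^{1/2} + ε. -/
open scoped ComplexOrder

noncomputable section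

/-- A von Neumann algebra is closed under the complex scalar action. -/
instance VonNeumannAlgebra.instSMulMemClass {H : Type*} [NormedAddCommGroup H]
    [InnerProductSpace ℂ H] [CompleteSpace H] :
    SMulMemClass (VonNeumannAlgebra H) ℂ (H →L[ℂ] H) :=
  ⟨fun {s} c _ ha => s.toStarSubalgebra.smul_mem ha c⟩

/-- An element of a `*`-ring is positive if it is of the form `star z * z`. -/
def IsPosElem {A : Type*} [Mul A] [Star A] (x : A) : Prop :=
  ∃ z : A, x = star z * z

/-- A linear map between complex `*`-algebras is completely positive if all of its
matrix amplifications map positive elements to positive elements. -/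
def IsCPMap {A B : Type*} [Ring A] [StarRing A] [Algebra ℂ A]
    [Ring B] [StarRing B] [Algebra ℂ B] (Φ : A →ₗ[ℂ] B) : Prop :=
  ∀ (k : ℕ) (x : Matrix (Fin k) (Fin k) A), IsPosElem x → IsPosElem (x.map Φ)

/-- A unital completely positive map. -/
def IsUCPMap {A B : Type*} [Ring A] [StarRing A] [Algebra ℂ A]
    [Ring B] [StarRing B] [Algebra ℂ B] (Φ : A →ₗ[ℂ] B) : Prop :=
  Φ 1 = 1 ∧ IsCPMap Φ

/-- A state on a complex `*`-algebra: unital and positive. -/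
def IsState {A : Type*} [Ring A] [StarRing A] [Algebra ℂ A] (φ : A →ₗ[ℂ] ℂ) : Prop :=
  φ 1 = 1 ∧ ∀ x : A, 0 ≤ φ (star x * x)

/-- A positive linear map is faithful if `Φ (star x * x) = 0` implies `x = 0`. -/
def IsFaithfulPosMap {A B : Type*} [Ring A] [StarRing A] [Algebra ℂ A]
    [AddCommMonoid B] [Module ℂ B] (Φ : A →ₗ[ℂ] B) : Prop :=
  ∀ x : A, Φ (star x * x) = 0 → x = 0

/-- The normalized trace `tr_m` on `m × m` complex matrices. -/
def trNorm (m : ℕ) (x : Matrix (Fin m) (Fin m) ℂ) : ℂ :=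
  x.trace / (m : ℂ)

/-- `‖x‖_φ = φ(x* x)^{1/2}`. -/
def stateNorm {A : Type*} [Ring A] [StarRing A] [Algebra ℂ A]
    (φ : A →ₗ[ℂ] ℂ) (x : A) : ℝ :=
  Real.sqrt (φ (star x * x)).re

section Helpers

set_option linter.unusedSectionVars false

variable {A B : Type*} [Ring A] [StarRing A] [Algebra ℂ A] [StarModule ℂ A]
  [Ring B] [StarRing B] [Algebra ℂ B] [StarModule ℂ B]

lemma IsState.nonneg_re {ω : A →ₗ[ℂ] ℂ} (hω : IsState ω) (x : A) :
    0 ≤ (ω (star x * x)).re :=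
  (Complex.nonneg_iff.mp (hω.2 x)).1

lemma IsState.im_zero {ω : A →ₗ[ℂ] ℂ} (hω : IsState ω) (x : A) :
    (ω (star x * x)).im = 0 :=
  ((Complex.nonneg_iff.mp (hω.2 x)).2).symm

lemma IsState.hermit {ω : A →ₗ[ℂ] ℂ} (hω : IsState ω) (a b : A) :
    ω (star b * a) = starRingEnd ℂ (ω (star a * b)) := by
  have key : ∀ c d : A, (ω (star c * d)).im + (ω (star d * c)).im = 0 := by
    intro c d
    have e : star (c + d) * (c + d)
        = star c * c + (star c * d + star d * c) + star d * d := by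
      simp only [star_add]; noncomm_ring
    have h := hω.im_zero (c + d)
    rw [e] at h
    simp only [map_add, Complex.add_im, hω.im_zero c, hω.im_zero d] at h
    linarith
  have key2 : (ω (star a * b)).re = (ω (star b * a)).re := by
    have h := key a (Complex.I • b)
    have e1 : star a * (Complex.I • b) = Complex.I • (star a * b) := by
      rw [mul_smul_comm]
    have e2 : star (Complex.I • b) * a = (-Complex.I) • (star b * a) := by
      rw [star_smul, smul_mul_assoc, Complex.star_def, Complex.conj_I]
    rw [e1, e2, map_smul, map_smul] at h
    have h' : (Complex.I * ω (star a * b)).im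
        + ((-Complex.I) * ω (star b * a)).im = 0 := by
      simpa [smul_eq_mul] using h
    simp only [Complex.mul_im, Complex.neg_im, Complex.neg_re, Complex.I_re,
      Complex.I_im, neg_mul, zero_mul, one_mul, mul_zero, zero_add, add_zero,
      neg_zero, neg_neg] at h'
    linarith
  have key1 := key a b
  apply Complex.ext
  · simpa [Complex.conj_re] using key2.symm
  · simp only [Complex.conj_im]
    linarith

lemma IsState.star_apply {ω : A →ₗ[ℂ] ℂ} (hω : IsState ω) (x : A) :
    ω (star x) = starRingEnd ℂ (ω x) := by
  have h := hω.hermit 1 x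
  simpa using h

lemma IsState.cs {ω : A →ₗ[ℂ] ℂ} (hω : IsState ω) (a b : A) :
    ‖ω (star a * b)‖ ^ 2 ≤ (ω (star a * a)).re * (ω (star b * b)).re := by
  set c := ω (star a * b) with hc
  by_cases hc0 : c = 0
  · rw [hc0]
    simpa using mul_nonneg (hω.nonneg_re a) (hω.nonneg_re b)
  · set r : ℝ := ‖c‖ with hr
    have hrpos : (0:ℝ) < r := by
      rw [hr]; exact (norm_pos_iff.mpr hc0)
    have hr0 : ((r:ℝ):ℂ) ≠ 0 := by exact_mod_cast hrpos.ne'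
    have hcc : starRingEnd ℂ c * c = ((r:ℝ):ℂ) * ((r:ℝ):ℂ) := by
      rw [mul_comm, Complex.mul_conj, Complex.normSq_eq_norm_sq, ← hr]
      push_cast; ring
    have key : ∀ t : ℝ, 0 ≤ (ω (star a * a)).re * (t * t)
        + (2 * r) * t + (ω (star b * b)).re := by
      intro t
      set μ : ℂ := (t : ℂ) * (c / (r:ℂ)) with hμ
      have hμconj : starRingEnd ℂ μ = (t:ℂ) * (starRingEnd ℂ c / (r:ℂ)) := by
        rw [hμ]
        simp [map_mul, map_div₀, Complex.conj_ofReal]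
      have h1 : μ * starRingEnd ℂ μ = ((t*t : ℝ) : ℂ) := by
        rw [hμconj, hμ]
        have e : (t:ℂ) * (c / (r:ℂ)) * ((t:ℂ) * (starRingEnd ℂ c / (r:ℂ)))
            = ((t:ℂ) * (t:ℂ)) * ((starRingEnd ℂ c * c) / ((r:ℂ) * (r:ℂ))) := by
          ring
        rw [e, hcc, div_self (mul_ne_zero hr0 hr0)]
        push_cast; ring
      have h2 : starRingEnd ℂ μ * c = ((t * r : ℝ) : ℂ) := by
        rw [hμconj]
        have e : (t:ℂ) * (starRingEnd ℂ c / (r:ℂ)) * c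
            = (t:ℂ) * ((starRingEnd ℂ c * c) / (r:ℂ)) := by ring
        rw [e, hcc, mul_div_assoc, div_self hr0]
        push_cast; ring
      have h3 : μ * starRingEnd ℂ c = ((t * r : ℝ) : ℂ) := by
        rw [hμ]
        have e : (t:ℂ) * (c / (r:ℂ)) * starRingEnd ℂ c
            = (t:ℂ) * ((starRingEnd ℂ c * c) / (r:ℂ)) := by ring
        rw [e, hcc, mul_div_assoc, div_self hr0]
        push_cast; ring
      have e : star (μ • a + b) * (μ • a + b)
          = (μ * starRingEnd ℂ μ) • (star a * a) + (starRingEnd ℂ μ) • (star a * b)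
            + μ • (star b * a) + star b * b := by
        simp only [star_add, star_smul, Complex.star_def, add_mul, mul_add, smul_add,
          smul_mul_assoc, mul_smul_comm, smul_smul]
        abel
      have hba : ω (star b * a) = starRingEnd ℂ c := hω.hermit a b
      have hval : ω (star (μ • a + b) * (μ • a + b))
          = ((t*t:ℝ):ℂ) * ω (star a * a) + (((t*r:ℝ):ℂ) + ((t*r:ℝ):ℂ)
            + ω (star b * b)) := by
        rw [e, map_add, map_add, map_add, map_smul, map_smul, map_smul, hba,
          smul_eq_mul, smul_eq_mul, smul_eq_mul, ← hc, h1, h2, h3]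
        ring
      have hx := hω.nonneg_re (μ • a + b)
      rw [hval] at hx
      simp only [Complex.add_re, Complex.re_ofReal_mul, Complex.ofReal_re] at hx
      nlinarith [hx]
    have hd := discrim_le_zero key
    simp only [discrim] at hd
    have : ‖c‖ ^ 2 = r * r := by rw [hr]; ring
    nlinarith [hω.nonneg_re a, hω.nonneg_re b]

lemma IsCPMap.map_star {Φ : A →ₗ[ℂ] B} (hΦ : IsCPMap Φ) (x : A) :
    Φ (star x) = star (Φ x) := by
  set z : Matrix (Fin 2) (Fin 2) A := !![1, x; 0, 0] with hz
  obtain ⟨W, hW⟩ := hΦ 2 (star z * z) ⟨z, rfl⟩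
  have hsa : star ((star z * z).map Φ) = (star z * z).map Φ := by
    rw [hW, star_mul, star_star]
  have h10 : ((star z * z).map Φ) 1 0 = Φ (star x) := by
    simp [Matrix.map_apply, Matrix.mul_apply, Fin.sum_univ_two, hz,
      Matrix.star_eq_conjTranspose, Matrix.conjTranspose_apply]
  have h01 : ((star z * z).map Φ) 0 1 = Φ x := by
    simp [Matrix.map_apply, Matrix.mul_apply, Fin.sum_univ_two, hz,
      Matrix.star_eq_conjTranspose, Matrix.conjTranspose_apply]
  have h := congrArg (fun M => M 1 0) hsa
  rw [Matrix.star_eq_conjTranspose, Matrix.conjTranspose_apply, h01, h10] at h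
  exact h.symm

lemma IsCPMap.map_pos {Φ : A →ₗ[ℂ] B} (hΦ : IsCPMap Φ) {x : A} (hx : IsPosElem x) :
    IsPosElem (Φ x) := by
  obtain ⟨z, hzz⟩ := hx
  have hP : IsPosElem (Matrix.of (fun _ _ => x) : Matrix (Fin 1) (Fin 1) A) := by
    refine ⟨Matrix.of (fun _ _ => z), ?_⟩
    ext i j
    simp [Matrix.mul_apply, Fin.sum_univ_one, Matrix.star_eq_conjTranspose,
      Matrix.conjTranspose_apply, hzz]
  obtain ⟨W, hW⟩ := hΦ 1 _ hP
  refine ⟨W 0 0, ?_⟩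
  have h := congrArg (fun M => M 0 0) hW
  simpa [Matrix.map_apply, Matrix.mul_apply, Fin.sum_univ_one,
    Matrix.star_eq_conjTranspose, Matrix.conjTranspose_apply] using h

lemma IsCPMap.sum_pos {k : ℕ} {Φ : A →ₗ[ℂ] B} (hΦ : IsCPMap Φ) {ω : B →ₗ[ℂ] ℂ}
    (hω : IsState ω) (P : Matrix (Fin k) (Fin k) A) (hP : IsPosElem P) (a : Fin k → B) :
    0 ≤ ω (∑ i, ∑ j, star (a i) * Φ (P i j) * a j) := by
  obtain ⟨W, hW⟩ := hΦ k P hP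
  have hentry : ∀ i j, Φ (P i j) = ∑ l, star (W l i) * W l j := by
    intro i j
    have h := congrArg (fun M => M i j) hW
    simpa [Matrix.map_apply, Matrix.mul_apply, Matrix.star_eq_conjTranspose,
      Matrix.conjTranspose_apply] using h
  have key : (∑ i, ∑ j, star (a i) * Φ (P i j) * a j)
      = ∑ l, star (∑ j, W l j * a j) * (∑ j, W l j * a j) := by
    have swap : ∀ (f : Fin k → Fin k → Fin k → B),
        ∑ i, ∑ j, ∑ l, f i j l = ∑ l, ∑ i, ∑ j, f i j l :=
      fun f => (Finset.sum_congr rfl (fun i _ => Finset.sum_comm)).trans Finset.sum_comm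
    calc (∑ i, ∑ j, star (a i) * Φ (P i j) * a j)
        = ∑ i, ∑ j, ∑ l, star (a i) * (star (W l i) * (W l j * a j)) := by
          simp_rw [hentry, Finset.mul_sum, Finset.sum_mul, mul_assoc]
      _ = ∑ l, ∑ i, ∑ j, star (a i) * (star (W l i) * (W l j * a j)) := swap _
      _ = ∑ l, star (∑ j, W l j * a j) * (∑ j, W l j * a j) := by
          simp_rw [star_sum, star_mul, Finset.sum_mul, Finset.mul_sum, mul_assoc]
  rw [key, map_sum]
  exact Finset.sum_nonneg fun l _ => hω.2 _

lemma IsUCPMap.ks {Φ : A →ₗ[ℂ] B} (hΦ : IsUCPMap Φ) {ω : B →ₗ[ℂ] ℂ}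
    (hω : IsState ω) (x : A) :
    ω (star (Φ x) * Φ x) ≤ ω (Φ (star x * x)) := by
  set z : Matrix (Fin 2) (Fin 2) A := !![1, x; 0, 0] with hz
  set a : Fin 2 → B := ![-Φ x, 1] with ha
  have h := hΦ.2.sum_pos hω (star z * z) ⟨z, rfl⟩ a
  have hP : ∀ i j, (star z * z) i j = (!![1, x; star x, star x * x] : Matrix _ _ A) i j := by
    intro i j
    fin_cases i <;> fin_cases j <;>
      simp [Matrix.mul_apply, Fin.sum_univ_two, hz,
        Matrix.star_eq_conjTranspose, Matrix.conjTranspose_apply]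
  have key : (∑ i, ∑ j, star (a i) * Φ ((star z * z) i j) * a j)
      = Φ (star x * x) - star (Φ x) * Φ x := by
    simp only [Fin.sum_univ_two, hP]
    simp [ha, hΦ.1, hΦ.2.map_star, mul_assoc]
    noncomm_ring
  rw [key] at h
  rw [map_sub] at h
  exact sub_nonneg.mp h

lemma stateNorm_nonneg {ω : A →ₗ[ℂ] ℂ} (x : A) : 0 ≤ stateNorm ω x :=
  Real.sqrt_nonneg _

lemma stateNorm_sq {ω : A →ₗ[ℂ] ℂ} (hω : IsState ω) (x : A) :
    stateNorm ω x ^ 2 = (ω (star x * x)).re :=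
  Real.sq_sqrt (hω.nonneg_re x)

lemma stateNorm_add_le {ω : A →ₗ[ℂ] ℂ} (hω : IsState ω) (a b : A) :
    stateNorm ω (a + b) ≤ stateNorm ω a + stateNorm ω b := by
  have hA := hω.nonneg_re a
  have hB := hω.nonneg_re b
  have hcs : (ω (star a * b)).re ≤ stateNorm ω a * stateNorm ω b := by
    have h1 : (ω (star a * b)).re ≤ ‖ω (star a * b)‖ :=
      Complex.re_le_norm _
    have h2 : ‖ω (star a * b)‖ ^ 2 ≤ (stateNorm ω a * stateNorm ω b) ^ 2 := by
      rw [mul_pow, stateNorm_sq hω, stateNorm_sq hω]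
      exact hω.cs a b
    nlinarith [norm_nonneg (ω (star a * b)),
      mul_nonneg (stateNorm_nonneg (ω := ω) a) (stateNorm_nonneg (ω := ω) b)]
  have expand : (ω (star (a + b) * (a + b))).re
      = (ω (star a * a)).re + 2 * (ω (star a * b)).re + (ω (star b * b)).re := by
    have e : star (a + b) * (a + b)
        = star a * a + (star a * b + star b * a) + star b * b := by
      simp only [star_add]; noncomm_ring
    rw [e, map_add, map_add, map_add, hω.hermit a b]
    simp only [Complex.add_re, Complex.conj_re]
    ring
  have hle : (ω (star (a + b) * (a + b))).re ≤ (stateNorm ω a + stateNorm ω b) ^ 2 := by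
    rw [expand]
    have e1 := stateNorm_sq hω a
    have e2 := stateNorm_sq hω b
    nlinarith [hcs]
  calc stateNorm ω (a + b) = Real.sqrt (ω (star (a + b) * (a + b))).re := rfl
    _ ≤ Real.sqrt ((stateNorm ω a + stateNorm ω b) ^ 2) := Real.sqrt_le_sqrt hle
    _ = stateNorm ω a + stateNorm ω b := Real.sqrt_sq
        (add_nonneg (stateNorm_nonneg _) (stateNorm_nonneg _))

end Helpers

set_option maxHeartbeats 2000000

theorem corollary_estimates {H : Type*} [NormedAddCommGroup H] [InnerProductSpace ℂ H]
    [CompleteSpace H]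
    (M : VonNeumannAlgebra H) (φ : M →ₗ[ℂ] ℂ) (hφ : IsState φ) (hφf : IsFaithfulPosMap φ)
    (m : ℕ) (T : Matrix (Fin m) (Fin m) ℂ →ₗ[ℂ] M) (hT : IsUCPMap T)
    (S : M →ₗ[ℂ] Matrix (Fin m) (Fin m) ℂ) (hS : IsUCPMap S)
    -- `ψ ∘ S = φ`, where `ψ := φ ∘ T`
    (hS1 : ∀ y : M, φ (T (S y)) = φ y)
    -- `ψ(x* S(y)) = φ(T(x)* y)`
    (hS2 : ∀ (x : Matrix (Fin m) (Fin m) ℂ) (y : M),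
      φ (T (star x * S y)) = φ (star (T x) * y))
    (u : M) (hu : u ∈ unitary M)
    (v : Matrix (Fin m) (Fin m) ℂ) (hv : v ∈ unitary (Matrix (Fin m) (Fin m) ℂ))
    (ε : ℝ) (hε : 0 < ε) (hclose : stateNorm φ (T v - u) < ε) :
    stateNorm (φ.comp T) (S u - v) ^ 2 < 2 * ε ∧
      stateNorm φ (T (S u) - u) < Real.sqrt (2 * ε) + ε := by
  obtain ⟨hu1, hu2⟩ := Unitary.mem_iff.mp hu
  obtain ⟨hv1, hv2⟩ := Unitary.mem_iff.mp hv
  set ψ : Matrix (Fin m) (Fin m) ℂ →ₗ[ℂ] ℂ := φ.comp T with hψdef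
  have hψap : ∀ x, ψ x = φ (T x) := fun x => rfl
  have hψs : IsState ψ := by
    constructor
    · rw [hψap, hT.1, hφ.1]
    · intro x
      obtain ⟨w, hw⟩ := hT.2.map_pos (⟨x, rfl⟩ : IsPosElem (star x * x))
      rw [hψap, hw]
      exact hφ.2 w
  -- `Re φ(T(v)* u) > 1 - ε`
  have hTu1 : φ (star u * u) = 1 := by rw [hu1, hφ.1]
  have hcabs : ‖φ (star (T v - u) * u)‖ < ε := by
    have hsq : ‖φ (star (T v - u) * u)‖ ^ 2
        ≤ stateNorm φ (T v - u) ^ 2 := by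
      rw [stateNorm_sq hφ]
      have h := hφ.cs (T v - u) u
      rw [hTu1] at h
      simpa using h
    nlinarith [norm_nonneg (φ (star (T v - u) * u)),
      stateNorm_nonneg (ω := φ) (T v - u), hclose, hε]
  have hre : 1 - ε < (φ (star (T v) * u)).re := by
    have hexp : φ (star (T v - u) * u) = φ (star (T v) * u) - 1 := by
      rw [star_sub, sub_mul, map_sub, hTu1]
    have h1 : |(φ (star (T v - u) * u)).re| ≤ ‖φ (star (T v - u) * u)‖ :=
      Complex.abs_re_le_norm _
    rw [hexp] at h1 hcabs
    have h2 : |(φ (star (T v) * u)).re - 1| < ε := by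
      calc |(φ (star (T v) * u)).re - 1| = |(φ (star (T v) * u) - 1).re| := by
            simp [Complex.sub_re]
        _ ≤ ‖φ (star (T v) * u) - 1‖ := Complex.abs_re_le_norm _
        _ < ε := hcabs
    have := abs_lt.mp h2
    linarith [this.1]
  -- `ψ(S(u)* S(u)).re ≤ 1`
  have hSuSu : (ψ (star (S u) * S u)).re ≤ 1 := by
    have h := hS.ks hψs u
    rw [hu1, hS.1, hψs.1] at h
    have := (Complex.le_def.mp h).1
    simpa using this
  -- expand `‖S u - v‖_ψ²`
  have h1 : ψ (star v * S u) = φ (star (T v) * u) := hS2 v u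
  have h2 : ψ (star (S u) * v) = starRingEnd ℂ (φ (star (T v) * u)) := by
    have e : star (S u) * v = star (star v * S u) := by
      rw [star_mul, star_star]
    rw [e, hψs.star_apply, h1]
  have expand1 : (ψ (star (S u - v) * (S u - v))).re
      = (ψ (star (S u) * S u)).re + 1 - 2 * (φ (star (T v) * u)).re := by
    have e : star (S u - v) * (S u - v)
        = star (S u) * S u - star (S u) * v - star v * S u + star v * v := by
      simp only [star_sub]; noncomm_ring
    rw [e]
    rw [map_add, map_sub, map_sub, h1, h2, hv1, hψs.1]
    simp only [Complex.add_re, Complex.sub_re, Complex.conj_re, Complex.one_re]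
    ring
  have goal1 : stateNorm ψ (S u - v) ^ 2 < 2 * ε := by
    rw [stateNorm_sq hψs, expand1]
    linarith
  refine ⟨goal1, ?_⟩
  -- second estimate
  have h2a : stateNorm ψ (S u - v) < Real.sqrt (2 * ε) := by
    exact (Real.lt_sqrt (stateNorm_nonneg _)).mpr goal1
  have hTle : stateNorm φ (T (S u - v)) ≤ stateNorm ψ (S u - v) := by
    have h := hT.ks hφ (S u - v)
    have hre' := (Complex.le_def.mp h).1
    exact Real.sqrt_le_sqrt hre'
  have hsplit : T (S u) - u = T (S u - v) + (T v - u) := by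
    rw [map_sub]
    abel
  calc stateNorm φ (T (S u) - u) = stateNorm φ (T (S u - v) + (T v - u)) := by
        rw [hsplit]
    _ ≤ stateNorm φ (T (S u - v)) + stateNorm φ (T v - u) := stateNorm_add_le hφ _ _
    _ < Real.sqrt (2 * ε) + ε := by
        have := lt_of_le_of_lt hTle h2a
        linarith
end
end

section
/- Let M be a von Neumann algebra, H a Hilbert M-bimodule, and (ξ_1,…,ξ_n), (η_1,…,η_n) two n-tuples of unit vectors in H. Suppose ε > 0, δ > 0 and a_1,…,a_p ∈ M satisfy, for every 1 ≤ k ≤ n: ‖(1 − Σ_j a_j*a_j)ξ_k‖ < ε, ‖(1 − Σ_j a_j*a_j)η_k‖ < ε, ‖ξ_k(1 − Σ_j a_j*a_j)‖ < ε, ‖η_k(1 − Σ_j a_j*a_j)‖ < ε, ‖(1 − Σ_j a_j a_j*)ξ_k‖ < ε, ‖(1 − Σ_j a_j a_j*)η_k‖ < ε, ‖ξ_k(1 − Σ_j a_j a_j*)‖ < ε, ‖η_k(1 − Σ_j a_j a_j*)‖ < ε, and Σ_j ‖a_j ξ_k − η_k a_j‖² < δ. Then Σ_j ‖a_j* η_k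 − ξ_k a_j*‖² < 4ε + δ for every 1 ≤ k ≤ n; in particular, if 4ε ≤ δ then Σ_j ‖a_j* η_k − ξ_k a_j*‖² < 2δ. -/
noncomputable section

/-- A Hilbert bimodule over a concrete von Neumann algebra `M ⊆ B(K)`: a complex Hilbert
space `E` together with a unital `*`-homomorphism `L : M → B(E)` (the left action) and a
unital `*`-antihomomorphism `M → B(E)` (the right action, encoded as a unital
`*`-homomorphism `R` on the opposite algebra `Mᵐᵒᵖ`) with commuting ranges. -/
structure HilbertBimodule {K : Type*} [NormedAddCommGroup K] [InnerProductSpace ℂ K]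
    [CompleteSpace K] (M : VonNeumannAlgebra K)
    (E : Type*) [NormedAddCommGroup E] [InnerProductSpace ℂ E] [CompleteSpace E] where
  L : M →⋆ₐ[ℂ] (E →L[ℂ] E)
  R : (↥M)ᵐᵒᵖ →⋆ₐ[ℂ] (E →L[ℂ] E)
  commutes : ∀ (x y : M) (ξ : E),
    L x (R (MulOpposite.op y) ξ) = R (MulOpposite.op y) (L x ξ)

namespace HilbertBimodule

variable {K : Type*} [NormedAddCommGroup K] [InnerProductSpace ℂ K] [CompleteSpace K]
  {M : VonNeumannAlgebra K} {E : Type*} [NormedAddCommGroup E] [InnerProductSpace ℂ E]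
  [CompleteSpace E]

/-- The left action `x ξ`. -/
def lsmul (b : HilbertBimodule M E) (x : M) (ξ : E) : E := b.L x ξ

/-- The right action `ξ x`. -/
def rsmul (b : HilbertBimodule M E) (ξ : E) (x : M) : E := b.R (MulOpposite.op x) ξ

end HilbertBimodule

namespace HilbertBimodule

variable {K : Type*} [NormedAddCommGroup K] [InnerProductSpace ℂ K] [CompleteSpace K]
  {M : VonNeumannAlgebra K} {E : Type*} [NormedAddCommGroup E] [InnerProductSpace ℂ E]
  [CompleteSpace E]

set_option linter.unusedSectionVars false

local notation "⟪" x ", " y "⟫" => @inner ℂ _ _ x y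
open RCLike ComplexConjugate

lemma inner_lsmul_left (b : HilbertBimodule M E) (x : M) (v w : E) :
    ⟪b.lsmul x v, w⟫ = ⟪v, b.lsmul (star x) w⟫ := by
  rw [lsmul, lsmul, map_star, ContinuousLinearMap.star_eq_adjoint,
    ContinuousLinearMap.adjoint_inner_right]

lemma inner_rsmul_left (b : HilbertBimodule M E) (x : M) (v w : E) :
    ⟪b.rsmul v x, w⟫ = ⟪v, b.rsmul w (star x)⟫ := by
  rw [rsmul, rsmul, MulOpposite.op_star, map_star, ContinuousLinearMap.star_eq_adjoint,
    ContinuousLinearMap.adjoint_inner_right]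

lemma lsmul_mul (b : HilbertBimodule M E) (x y : M) (v : E) :
    b.lsmul (x * y) v = b.lsmul x (b.lsmul y v) := by
  simp [lsmul, map_mul]

lemma rsmul_mul (b : HilbertBimodule M E) (x y : M) (v : E) :
    b.rsmul v (x * y) = b.rsmul (b.rsmul v x) y := by
  simp only [rsmul, MulOpposite.op_mul, map_mul, ContinuousLinearMap.mul_apply]

lemma norm_lsmul_sq (b : HilbertBimodule M E) (x : M) (v : E) :
    ‖b.lsmul x v‖ ^ 2 = re ⟪v, b.lsmul (star x * x) v⟫ := by
  rw [← @inner_self_eq_norm_sq ℂ, inner_lsmul_left, lsmul_mul]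

lemma norm_rsmul_sq (b : HilbertBimodule M E) (x : M) (v : E) :
    ‖b.rsmul v x‖ ^ 2 = re ⟪v, b.rsmul v (x * star x)⟫ := by
  rw [← @inner_self_eq_norm_sq ℂ, inner_rsmul_left, rsmul_mul]

lemma lsmul_sum {p : ℕ} (b : HilbertBimodule M E) (x : Fin p → M) (v : E) :
    b.lsmul (∑ j, x j) v = ∑ j, b.lsmul (x j) v := by
  simp only [lsmul, map_sum]
  rw [ContinuousLinearMap.sum_apply]

lemma rsmul_sum {p : ℕ} (b : HilbertBimodule M E) (x : Fin p → M) (v : E) :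
    b.rsmul v (∑ j, x j) = ∑ j, b.rsmul v (x j) := by
  simp only [rsmul, Finset.op_sum, map_sum]
  rw [ContinuousLinearMap.sum_apply]

lemma sum_norm_lsmul {p : ℕ} (b : HilbertBimodule M E) (x : Fin p → M) (v : E)
    (hv : ‖v‖ = 1) :
    ∑ j, ‖b.lsmul (x j) v‖ ^ 2
      = 1 - re ⟪v, b.lsmul (1 - ∑ j, star (x j) * x j) v⟫ := by
  have h1 : b.lsmul (1 - ∑ j, star (x j) * x j) v
      = v - b.lsmul (∑ j, star (x j) * x j) v := by
    simp [lsmul, map_sub, map_one]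
  rw [h1, inner_sub_right, map_sub, lsmul_sum, inner_sum, map_sum]
  have : re (⟪v, v⟫ : ℂ) = 1 := by
    rw [inner_self_eq_norm_sq, hv]; norm_num
  rw [this]
  simp [norm_lsmul_sq]

lemma sum_norm_rsmul {p : ℕ} (b : HilbertBimodule M E) (x : Fin p → M) (v : E)
    (hv : ‖v‖ = 1) :
    ∑ j, ‖b.rsmul v (x j)‖ ^ 2
      = 1 - re ⟪v, b.rsmul v (1 - ∑ j, x j * star (x j))⟫ := by
  have h1 : b.rsmul v (1 - ∑ j, x j * star (x j))
      = v - b.rsmul v (∑ j, x j * star (x j)) := by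
    simp [rsmul, map_sub, map_one]
  rw [h1, inner_sub_right, map_sub, rsmul_sum, inner_sum, map_sum]
  have : re (⟪v, v⟫ : ℂ) = 1 := by
    rw [inner_self_eq_norm_sq, hv]; norm_num
  rw [this]
  simp [norm_rsmul_sq]

lemma cross (b : HilbertBimodule M E) (x : M) (v w : E) :
    re ⟪b.lsmul (star x) w, b.rsmul v (star x)⟫ = re ⟪b.lsmul x v, b.rsmul w x⟫ := by
  have h : ⟪b.lsmul (star x) w, b.rsmul v (star x)⟫
      = ⟪b.rsmul w x, b.lsmul x v⟫ := by
    rw [inner_lsmul_left, star_star]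
    have hcomm : b.lsmul x (b.rsmul v (star x)) = b.rsmul (b.lsmul x v) (star x) :=
      b.commutes x (star x) v
    rw [hcomm, ← inner_rsmul_left]
  rw [h, inner_re_symm]

lemma re_bound (v u : E) (hv : ‖v‖ = 1) {ε : ℝ} (hu : ‖u‖ < ε) :
    |re ⟪v, u⟫| < ε := by
  calc |re ⟪v, u⟫| ≤ ‖(⟪v, u⟫ : ℂ)‖ := abs_re_le_norm _
    _ ≤ ‖v‖ * ‖u‖ := norm_inner_le_norm _ _
    _ = ‖u‖ := by rw [hv, one_mul]
    _ < ε := hu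


lemma sum_norm_sub {p : ℕ} (b : HilbertBimodule M E) (x : Fin p → M) (v w : E)
    (hv : ‖v‖ = 1) (hw : ‖w‖ = 1) :
    ∑ j, ‖b.lsmul (x j) v - b.rsmul w (x j)‖ ^ 2
      = 2 - re ⟪v, b.lsmul (1 - ∑ j, star (x j) * x j) v⟫
          - re ⟪w, b.rsmul w (1 - ∑ j, x j * star (x j))⟫
          - 2 * ∑ j, re ⟪b.lsmul (x j) v, b.rsmul w (x j)⟫ := by
  have h : ∀ j : Fin p, ‖b.lsmul (x j) v - b.rsmul w (x j)‖ ^ 2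
      = ‖b.lsmul (x j) v‖ ^ 2 - 2 * re ⟪b.lsmul (x j) v, b.rsmul w (x j)⟫
        + ‖b.rsmul w (x j)‖ ^ 2 := fun j => norm_sub_sq (𝕜 := ℂ) _ _
  simp_rw [h]
  rw [Finset.sum_add_distrib, Finset.sum_sub_distrib, sum_norm_lsmul b x v hv,
    sum_norm_rsmul b x w hw, ← Finset.mul_sum]
  ring

end HilbertBimodule

open HilbertBimodule RCLike in
theorem remark_almost_d {K : Type*} [NormedAddCommGroup K] [InnerProductSpace ℂ K]
    [CompleteSpace K] {M : VonNeumannAlgebra K}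
    {E : Type*} [NormedAddCommGroup E] [InnerProductSpace ℂ E] [CompleteSpace E]
    (b : HilbertBimodule M E) {n : ℕ} (ξ η : Fin n → E)
    (hξ : ∀ k, ‖ξ k‖ = 1) (hη : ∀ k, ‖η k‖ = 1)
    (ε δ : ℝ) (hε : 0 < ε) (hδ : 0 < δ)
    {p : ℕ} (a : Fin p → M)
    (ha1l : ∀ k, ‖b.lsmul (1 - ∑ j, star (a j) * a j) (ξ k)‖ < ε)
    (ha1r : ∀ k, ‖b.lsmul (1 - ∑ j, star (a j) * a j) (η k)‖ < ε)
    (ha2l : ∀ k, ‖b.rsmul (ξ k) (1 - ∑ j, star (a j) * a j)‖ < ε)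
    (ha2r : ∀ k, ‖b.rsmul (η k) (1 - ∑ j, star (a j) * a j)‖ < ε)
    (hb1l : ∀ k, ‖b.lsmul (1 - ∑ j, a j * star (a j)) (ξ k)‖ < ε)
    (hb1r : ∀ k, ‖b.lsmul (1 - ∑ j, a j * star (a j)) (η k)‖ < ε)
    (hb2l : ∀ k, ‖b.rsmul (ξ k) (1 - ∑ j, a j * star (a j))‖ < ε)
    (hb2r : ∀ k, ‖b.rsmul (η k) (1 - ∑ j, a j * star (a j))‖ < ε)
    (hc : ∀ k, ∑ j, ‖b.lsmul (a j) (ξ k) - b.rsmul (η k) (a j)‖ ^ 2 < δ) :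
    (∀ k, ∑ j, ‖b.lsmul (star (a j)) (η k) - b.rsmul (ξ k) (star (a j))‖ ^ 2 < 4 * ε + δ) ∧
      (4 * ε ≤ δ →
        ∀ k, ∑ j, ‖b.lsmul (star (a j)) (η k) - b.rsmul (ξ k) (star (a j))‖ ^ 2 < 2 * δ) := by
  have key : ∀ k, ∑ j, ‖b.lsmul (star (a j)) (η k) - b.rsmul (ξ k) (star (a j))‖ ^ 2
      < 4 * ε + δ := by
    intro k
    have E1 := b.sum_norm_sub a (ξ k) (η k) (hξ k) (hη k)
    have E2 := b.sum_norm_sub (fun j => star (a j)) (η k) (ξ k) (hη k) (hξ k)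
    simp only [star_star] at E2
    have hcr : ∑ j, re (inner ℂ (b.lsmul (star (a j)) (η k))
          (b.rsmul (ξ k) (star (a j))) : ℂ)
        = ∑ j, re (inner ℂ (b.lsmul (a j) (ξ k)) (b.rsmul (η k) (a j)) : ℂ) :=
      Finset.sum_congr rfl fun j _ => b.cross (a j) (ξ k) (η k)
    rw [hcr] at E2
    have B1 := HilbertBimodule.re_bound (ξ k) _ (hξ k) (ha1l k)
    have B2 := HilbertBimodule.re_bound (η k) _ (hη k) (hb2r k)
    have B3 := HilbertBimodule.re_bound (η k) _ (hη k) (hb1r k)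
    have B4 := HilbertBimodule.re_bound (ξ k) _ (hξ k) (ha2l k)
    have hC := hc k
    rw [E1] at hC
    rw [E2]
    rw [abs_lt] at B1 B2 B3 B4
    linarith [B1.1, B1.2, B2.1, B2.2, B3.1, B3.2, B4.1, B4.2]
  exact ⟨key, fun h k => by have := key k; linarith⟩
end
end

section
/- Let M be a von Neumann algebra and φ a faithful state on M. Suppose φ is ℚ-stable, i.e., for every n ∈ ℕ and all strictly positive rationals q_1,…,q_n with q_1 + ⋯ + q_n = 1 there exist isometries v_1,…,v_n ∈ M (v_j*v_j = 1) with Σ_j v_j v_j* = 1 and φ(v_j x) = q_j φ(x v_j) for all x ∈ M. Then φ is ℚ⁺-stable: for every n ∈ ℕ, every rational 0 < r ≤ 1 and all γ_1,…,γ_n ∈ ℚ⁺ with r(γ_1 + ⋯ + γ_n) = 1, there exist partial isometries w_1,…,w_n ∈ M and a projection e ∈ M such that Σ_j w_j w_j* = 1, φ(e) = r, w_j*w_j = e, and φ(w_j x) = γ_j φ(x w_j) for all x ∈ M and 1 ≤ j ≤ n. -/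
open scoped ComplexOrder

noncomputable section

/-- `φ a = γ a φ`, i.e. `φ(ax) = γ φ(xa)` for all `x`. -/
def StateCommutes {A : Type*} [Ring A] [StarRing A] [Algebra ℂ A]
    (φ : A →ₗ[ℂ] ℂ) (γ : ℝ) (a : A) : Prop :=
  ∀ x : A, φ (a * x) = (γ : ℂ) * φ (x * a)

/-- A projection in a `*`-ring. -/
def IsProjection {A : Type*} [Mul A] [Star A] (e : A) : Prop :=
  star e = e ∧ e * e = e

/-- `Γ`-stability of a state, for a set `Γ` of (strictly positive) reals. -/
def IsGammaStable {A : Type*} [Ring A] [StarRing A] [Algebra ℂ A]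
    (Γ : Set ℝ) (φ : A →ₗ[ℂ] ℂ) : Prop :=
  ∀ (n : ℕ) (r : ℝ) (γ : Fin n → ℝ), 0 < r → r ≤ 1 → (∀ j, γ j ∈ Γ) →
    r * (∑ j, γ j) = 1 →
    ∃ (v : Fin n → A) (e : A), IsProjection e ∧
      (∑ j, v j * star (v j)) = 1 ∧ φ e = (r : ℂ) ∧
      (∀ j, star (v j) * v j = e) ∧ ∀ j, StateCommutes φ (γ j) (v j)

/-- The multiplicative group of strictly positive rationals, as a set of reals. -/
def QPos : Set ℝ := {x : ℝ | ∃ q : ℚ, 0 < q ∧ (q : ℝ) = x}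

lemma polar_herm {A : Type*} [Ring A] [StarRing A] [Algebra ℂ A] [StarModule ℂ A]
    (φ : A →ₗ[ℂ] ℂ) (hpos : ∀ x : A, 0 ≤ φ (star x * x)) (x y : A) :
    φ (star y * x) = starRingEnd ℂ (φ (star x * y)) := by
  have him : ∀ z : A, (φ (star z * z)).im = 0 := by
    intro z
    have := hpos z
    rw [Complex.le_def] at this
    simpa using this.2.symm
  have h1 : (φ (star x * y)).im + (φ (star y * x)).im = 0 := by
    have e1 : φ (star (x + y) * (x + y))
        = φ (star x * x) + (φ (star x * y) + φ (star y * x)) + φ (star y * y) := by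
      simp only [star_add, add_mul, mul_add, map_add]
      ring
    have := him (x + y)
    rw [e1] at this
    simp only [Complex.add_im, him x, him y] at this
    linarith
  have h2 : (φ (star x * y)).re - (φ (star y * x)).re = 0 := by
    have e2 : φ (star (x + Complex.I • y) * (x + Complex.I • y))
        = φ (star x * x) + Complex.I * (φ (star x * y) - φ (star y * x))
          + φ (star y * y) := by
      simp only [star_add, star_smul, add_mul, mul_add, map_add, smul_mul_assoc,
        mul_smul_comm, map_smul, Complex.star_def, Complex.conj_I, smul_eq_mul,
        neg_mul, map_neg, neg_smul, neg_neg]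
      linear_combination (-(φ (star y * y))) * Complex.I_mul_I
    have := him (x + Complex.I • y)
    rw [e2] at this
    simp only [Complex.add_im, him x, him y, Complex.mul_im, Complex.I_re,
      Complex.I_im, Complex.sub_re, Complex.sub_im] at this
    linarith
  apply Complex.ext
  · simp only [Complex.conj_re]
    linarith
  · simp only [Complex.conj_im]
    linarith

lemma state_star {A : Type*} [Ring A] [StarRing A] [Algebra ℂ A] [StarModule ℂ A]
    (φ : A →ₗ[ℂ] ℂ) (hpos : ∀ x : A, 0 ≤ φ (star x * x)) (x : A) :
    φ (star x) = starRingEnd ℂ (φ x) := by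
  have := polar_herm φ hpos (1 : A) x
  simpa using this

lemma commutes_flip {A : Type*} [Ring A] [StarRing A] [Algebra ℂ A] [StarModule ℂ A]
    (φ : A →ₗ[ℂ] ℂ) (hpos : ∀ x : A, 0 ≤ φ (star x * x)) {γ : ℝ} {a : A}
    (hc : StateCommutes φ γ a) (z : A) :
    φ (z * star a) = (γ : ℂ) * φ (star a * z) := by
  have h1 : φ (z * star a) = starRingEnd ℂ (φ (a * star z)) := by
    have := state_star φ hpos (a * star z)
    rw [star_mul, star_star] at this
    exact this.symm ▸ this
  rw [h1, hc (star z), map_mul]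
  congr 1
  · simp
  · have := state_star φ hpos (star z * a)
    rw [star_mul, star_star] at this
    rw [← this]

theorem q_stable_implies_qpos_stable {H : Type*} [NormedAddCommGroup H]
    [InnerProductSpace ℂ H] [CompleteSpace H]
    (M : VonNeumannAlgebra H) (φ : M →ₗ[ℂ] ℂ) (hφ : IsState φ) (hφf : IsFaithfulPosMap φ)
    -- `φ` is `ℚ`-stable
    (hstable : ∀ (n : ℕ) (q : Fin n → ℚ), (∀ j, 0 < q j) → (∑ j, q j) = 1 →
      ∃ v : Fin n → M,
        (∀ j, star (v j) * v j = 1) ∧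
        (∑ j, v j * star (v j)) = 1 ∧
        ∀ j, StateCommutes φ (q j : ℝ) (v j)) :
    ∀ (n : ℕ) (r : ℚ) (γ : Fin n → ℚ), 0 < r → r ≤ 1 → (∀ j, 0 < γ j) →
      r * (∑ j, γ j) = 1 →
      ∃ (w : Fin n → M) (e : M), IsProjection e ∧
        (∑ j, w j * star (w j)) = 1 ∧ φ e = ((r : ℝ) : ℂ) ∧
        (∀ j, star (w j) * w j = e) ∧
        ∀ j, StateCommutes φ (γ j : ℝ) (w j) := by
  intro n r γ hr hr1 hγ hsum
  have hpos := hφ.2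
  by_cases hr_eq : r = 1
  · have hsum' : (∑ j, γ j) = 1 := by rw [hr_eq, one_mul] at hsum; exact hsum
    obtain ⟨v, hvv, hsumv, hcomm⟩ := hstable n γ hγ hsum'
    refine ⟨v, 1, ⟨star_one _, one_mul 1⟩, hsumv, ?_, fun j => by rw [hvv j], hcomm⟩
    rw [hφ.1, hr_eq]; norm_num
  · have hrlt : r < 1 := lt_of_le_of_ne hr1 hr_eq
    obtain ⟨u, huu, hsumu, hucomm⟩ := hstable 2 ![r, 1 - r]
      (by intro j; fin_cases j <;> simp [hr, sub_pos.mpr hrlt])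
      (by rw [Fin.sum_univ_two]; simp)
    obtain ⟨v, hvv, hsumv, hvcomm⟩ := hstable n (fun j => r * γ j)
      (fun j => mul_pos hr (hγ j))
      (by rw [← Finset.mul_sum]; exact hsum)
    set u0 := u 0 with hu0def
    have hu0 : star u0 * u0 = 1 := huu 0
    have hc0 : StateCommutes φ (r : ℝ) u0 := by
      have := hucomm 0; simpa using this
    refine ⟨fun j => v j * star u0, u0 * star u0, ?_, ?_, ?_, ?_, ?_⟩
    · exact ⟨by rw [star_mul, star_star],
        by rw [mul_assoc, ← mul_assoc (star u0), hu0, one_mul]⟩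
    · have hterm : ∀ j, v j * star u0 * star (v j * star u0) = v j * star (v j) := by
        intro j
        rw [star_mul, star_star, mul_assoc, ← mul_assoc (star u0), hu0, one_mul]
      simp only [hterm]
      exact hsumv
    · rw [hc0 (star u0), hu0, hφ.1, mul_one]
    · intro j
      rw [star_mul, star_star, mul_assoc, ← mul_assoc (star (v j)), hvv j, one_mul]
    · intro j x
      have h1 := hvcomm j (star u0 * x)
      have h2 := commutes_flip φ hpos hc0 (x * v j)
      rw [mul_assoc, h1, ← mul_assoc x, h2, mul_assoc (star u0)]
      push_cast
      ring
end
end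

section
/- Let Γ be a multiplicative subgroup of the strictly positive reals, M a von Neumann algebra, and φ a Γ-stable faithful state on M. Let 0 < r ≤ 1 and γ_1,…,γ_n ∈ Γ with r(γ_1 + ⋯ + γ_n) = 1. Then there exists a system of matrix units (e_{jk})_{1 ≤ j,k ≤ n} in M (i.e. e_{jk}* = e_{kj}, e_{jk} e_{lm} = δ_{kl} e_{jm}, and Σ_{j=1}^n e_{jj} = 1) such that φ(e_{jk}) = δ_{jk} r γ_j and φ(e_{jk} x) = γ_j γ_k^{-1} φ(x e_{jk}) for all x ∈ M and all 1 ≤ j,k ≤ n. (Consequently, the type I_n subfactor F spanned by the e_{jk} satisfies φ|_F = Tr_n(h·) with h = diag(rγ_1,…,rγ_n), and F is globally invariant under the modular automorphism group of φ.) -/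
open scoped ComplexOrder

noncomputable section

set_option maxHeartbeats 1000000 in
theorem lemma_matrix_units {H : Type*} [NormedAddCommGroup H]
    [InnerProductSpace ℂ H] [CompleteSpace H]
    (Γ : Set ℝ)
    -- `Γ` is a multiplicative subgroup of the strictly positive reals
    (hΓpos : ∀ γ ∈ Γ, (0 : ℝ) < γ) (hΓone : (1 : ℝ) ∈ Γ)
    (hΓmul : ∀ γ ∈ Γ, ∀ γ' ∈ Γ, γ * γ' ∈ Γ) (hΓinv : ∀ γ ∈ Γ, γ⁻¹ ∈ Γ)
    (M : VonNeumannAlgebra H) (φ : M →ₗ[ℂ] ℂ) (hφ : IsState φ) (hφf : IsFaithfulPosMap φ)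
    (hstable : IsGammaStable Γ φ)
    (n : ℕ) (r : ℝ) (γ : Fin n → ℝ) (hr0 : 0 < r) (hr1 : r ≤ 1)
    (hγ : ∀ j, γ j ∈ Γ) (hsum : r * (∑ j, γ j) = 1) :
    ∃ e : Fin n → Fin n → M,
      (∀ j k, star (e j k) = e k j) ∧
      (∀ j k l m, e j k * e l m = if k = l then e j m else 0) ∧
      (∑ j, e j j) = 1 ∧
      (∀ j k, φ (e j k) = if j = k then ((r * γ j : ℝ) : ℂ) else 0) ∧
      ∀ j k, StateCommutes φ (γ j / γ k) (e j k) := by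

  obtain ⟨v, e, ⟨hes, hee⟩, hvsum, hφe, hvv, hcomm⟩ := hstable n r γ hr0 hr1 hγ hsum
  have hγ0 : ∀ j, (γ j : ℂ) ≠ 0 := fun j => by
    exact_mod_cast (hΓpos _ (hγ j)).ne'
  -- positive functionals are hermitian
  have him : ∀ y : M, (φ (star y * y)).im = 0 := fun y =>
    ((Complex.le_def.mp (hφ.2 y)).2).symm
  have herm : ∀ x : M, φ (star x) = starRingEnd ℂ (φ x) := by
    intro x
    have e1 : star (1 + x) * (1 + x) = 1 + (x + star x) + star x * x := by
      rw [star_add, star_one]; noncomm_ring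
    have h1 := him (1 + x)
    rw [e1, map_add, map_add, map_add, hφ.1] at h1
    simp only [Complex.add_im, Complex.one_im, him x, add_zero, zero_add] at h1
    have e2 : star (1 + Complex.I • x) * (1 + Complex.I • x)
        = 1 + (Complex.I • x - Complex.I • star x) + star x * x := by
      have hsI : star (Complex.I • x) = -(Complex.I • star x) := by
        rw [star_smul, Complex.star_def, Complex.conj_I, neg_smul]
      rw [star_add, star_one, hsI]
      have hmm : (Complex.I • star x) * (Complex.I • x)
          = -(star x * x) := by
        rw [smul_mul_assoc, mul_smul_comm, smul_smul, Complex.I_mul_I, neg_one_smul]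
      rw [add_mul, mul_add, mul_add, one_mul, mul_one, neg_mul]
      rw [hmm]
      simp only [one_mul]
      abel
    have h2 := him (1 + Complex.I • x)
    rw [e2, map_add, map_add, map_sub, hφ.1, map_smul, map_smul] at h2
    simp only [Complex.add_im, Complex.sub_im, Complex.one_im, him x, add_zero,
      zero_add, smul_eq_mul, Complex.mul_im, Complex.I_re, Complex.I_im,
      zero_mul, one_mul] at h2
    apply Complex.ext
    · have h2' : (0 : ℝ) = (φ x).re - (φ (star x)).re := by simpa using h2.symm
      simp only [Complex.conj_re]
      linarith
    · simp only [Complex.conj_im]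
      linarith [h1]
  -- v j is a partial isometry: v j * e = v j
  have ve : ∀ j, v j * e = v j := by
    intro j
    have h0 : star (v j - v j * e) * (v j - v j * e) = 0 := by
      have hx : star (v j - v j * e) * (v j - v j * e)
          = star (v j) * v j - (star (v j) * v j) * e
            - e * (star (v j) * v j) + e * (star (v j) * v j) * e := by
        rw [star_sub, star_mul, hes]
        noncomm_ring
      rw [hx, hvv j]
      simp only [hee]
      abel
    have h := hφf (v j - v j * e) (by rw [h0, map_zero])
    rw [sub_eq_zero] at h
    exact h.symm
  -- range projections
  set p : Fin n → M := fun j => v j * star (v j) with hp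
  have hpsa : ∀ j, star (p j) = p j := by
    intro j; simp [hp, star_mul]
  have hpidem : ∀ j, p j * p j = p j := by
    intro j
    calc p j * p j = v j * (star (v j) * v j) * star (v j) := by
          simp only [hp]; noncomm_ring
      _ = v j * star (v j) := by rw [hvv j, ve j]
  have hpv : ∀ j, p j * v j = v j := by
    intro j; rw [hp, mul_assoc, hvv j, ve j]
  have hvp : ∀ j, star (v j) * p j = star (v j) := by
    intro j
    have := congrArg star (hpv j)
    rwa [star_mul, hpsa] at this
  -- the range projections are pairwise orthogonal
  have orth : ∀ j k, j ≠ k → p j * p k = 0 := by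
    intro j k hjk
    have hstarpp : ∀ i, star (p i * p k) * (p i * p k) = p k * p i * p k := by
      intro i
      rw [star_mul, hpsa, hpsa, mul_assoc, ← mul_assoc (p i), hpidem i, ← mul_assoc]
    have hsum0 : (∑ i ∈ Finset.univ.erase k, p k * p i * p k) = 0 := by
      have herase : (∑ i ∈ Finset.univ.erase k, p i) = 1 - p k := by
        rw [eq_sub_iff_add_eq, Finset.sum_erase_add _ _ (Finset.mem_univ k)]
        exact hvsum
      calc (∑ i ∈ Finset.univ.erase k, p k * p i * p k)
          = p k * (∑ i ∈ Finset.univ.erase k, p i) * p k := by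
            rw [Finset.mul_sum, Finset.sum_mul]
        _ = 0 := by
            rw [herase]
            simp only [mul_sub, sub_mul, mul_one, hpidem k]
            exact sub_self _
    have hterms : ∀ i ∈ Finset.univ.erase k, (0 : ℂ) ≤ φ (p k * p i * p k) := by
      intro i _
      have := hφ.2 (p i * p k)
      rwa [hstarpp i] at this
    have hz := (Finset.sum_eq_zero_iff_of_nonneg hterms).mp
      (by rw [← map_sum, hsum0, map_zero])
    have hjk' : j ∈ Finset.univ.erase k := Finset.mem_erase.mpr ⟨hjk, Finset.mem_univ j⟩
    exact hφf (p j * p k) (by rw [hstarpp j]; exact hz j hjk')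
  have vorth : ∀ j k, j ≠ k → star (v j) * v k = 0 := by
    intro j k hjk
    calc star (v j) * v k = (star (v j) * p j) * (p k * v k) := by rw [hvp, hpv]
      _ = star (v j) * (p j * p k) * v k := by noncomm_ring
      _ = 0 := by rw [orth j k hjk, mul_zero, zero_mul]
  -- φ(star(v j) x) = γ j⁻¹ φ(x star(v j))
  have scomm : ∀ j (x : M), φ (star (v j) * x)
      = ((γ j : ℂ))⁻¹ * φ (x * star (v j)) := by
    intro j x
    have h1 : φ (star (v j) * x) = starRingEnd ℂ (φ (star x * v j)) := by
      rw [← herm]; congr 1; rw [star_mul, star_star]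
    have h2 : φ (star x * v j) = (γ j : ℂ)⁻¹ * φ (v j * star x) := by
      rw [hcomm j (star x), ← mul_assoc, inv_mul_cancel₀ (hγ0 j), one_mul]
    rw [h1, h2, map_mul, ← herm, star_mul, star_star]
    congr 1
    rw [map_inv₀, Complex.conj_ofReal]
  refine ⟨fun j k => v j * star (v k), ?_, ?_, hvsum, ?_, ?_⟩
  · intro j k; rw [star_mul, star_star]
  · intro j k l m
    by_cases h : k = l
    · subst h
      rw [if_pos rfl, mul_assoc, ← mul_assoc (star (v k)), hvv k, ← mul_assoc, ve j]
    · rw [if_neg h, mul_assoc, ← mul_assoc (star (v k)), vorth k l h, zero_mul,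
        mul_zero]
  · intro j k
    by_cases h : j = k
    · subst h
      rw [if_pos rfl, hcomm j (star (v j)), hvv j, hφe]
      push_cast; ring
    · rw [if_neg h, hcomm j (star (v k)), vorth k j (Ne.symm h), map_zero, mul_zero]
  · intro j k x
    rw [mul_assoc, hcomm j (star (v k) * x), mul_assoc, scomm k (x * v j),
      ← mul_assoc x, ← mul_assoc]
    push_cast
    ring
end
end

section
/- Let Γ be a multiplicative subgroup of the strictly positive reals, M a von Neumann algebra, and φ a Γ-stable faithful state on M. Then for every γ ∈ Γ there exist m ∈ ℕ and partial isometries w_1,…,w_m ∈ M such that Σ_{j=1}^m w_j* w_j = 1 and φ(w_j x) = γ φ(x w_j) for all x ∈ M and 1 ≤ j ≤ m. -/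
open scoped ComplexOrder

noncomputable section

section Aux


variable {A : Type*} [Ring A] [StarRing A] [Algebra ℂ A] [StarModule ℂ A]

lemma state_star_aux (φ : A →ₗ[ℂ] ℂ) (hφ : ∀ x : A, 0 ≤ φ (star x * x)) (x : A) :
    φ (star x) = starRingEnd ℂ (φ x) := by
  have h0 : ∀ y : A, (φ (star y * y)).im = 0 := by
    intro y
    have := hφ y
    rw [Complex.le_def] at this
    exact this.2.symm
  have h1 := h0 (x + 1)
  have h2 := h0 (x + (Complex.I : ℂ) • 1)
  have hx := h0 x
  have h1' : (φ (star x * x) + φ (star x) + φ x + φ 1).im = 0 := by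
    have e : star (x + 1) * (x + 1) = star x * x + star x + x + 1 := by
      rw [star_add, star_one, mul_add, add_mul, add_mul]
      simp only [one_mul, mul_one]
      abel
    rw [e] at h1; simpa using h1
  have h2' : (φ (star x * x)).im + (φ (star x)).re - (φ x).re + (φ 1).im = 0 := by
    have e : star (x + (Complex.I : ℂ) • 1) * (x + (Complex.I : ℂ) • 1)
        = star x * x + (Complex.I : ℂ) • star x + (-Complex.I : ℂ) • x + 1 := by
      rw [star_add, star_smul, star_one, mul_add, add_mul, add_mul]
      simp only [smul_mul_assoc, mul_smul_comm, one_mul, mul_one, smul_smul,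
        Complex.star_def, Complex.conj_I]
      rw [show (Complex.I * -Complex.I : ℂ) = 1 by
        rw [mul_neg, Complex.I_mul_I, neg_neg]]
      rw [one_smul]
      abel
    rw [e] at h2
    simp only [map_add, map_smul, Complex.add_im, Complex.smul_im, smul_eq_mul,
      Complex.mul_im, Complex.I_re, Complex.I_im, Complex.neg_re, Complex.neg_im] at h2
    push_cast at h2 ⊢
    linarith [h2]
  have hone : (φ 1).im = 0 := by simpa using h0 1
  rw [Complex.ext_iff]
  constructor
  · simp only [Complex.conj_re]; linarith
  · simp only [Complex.add_im] at h1'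
    simp only [Complex.conj_im]
    linarith

lemma commutes_star_aux (φ : A →ₗ[ℂ] ℂ) (hst : ∀ y : A, φ (star y) = starRingEnd ℂ (φ y))
    (γ : ℝ) (hγ : γ ≠ 0) (a : A) (h : StateCommutes φ γ a) :
    StateCommutes φ γ⁻¹ (star a) := by
  intro x
  have e1 : φ (star a * x) = starRingEnd ℂ (φ (star x * a)) := by
    rw [← hst (star x * a), star_mul, star_star]
  have e2 : φ (x * star a) = starRingEnd ℂ (φ (a * star x)) := by
    rw [← hst (a * star x), star_mul, star_star]
  have h2 := h (star x)
  have hγC : (γ : ℂ) ≠ 0 := by exact_mod_cast hγ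
  have h3 := congrArg (starRingEnd ℂ) h2
  simp only [map_mul, Complex.conj_ofReal] at h3
  rw [e1, e2, h3, Complex.ofReal_inv, ← mul_assoc, inv_mul_cancel₀ hγC, one_mul]

lemma ve_eq_v_aux (φ : A →ₗ[ℂ] ℂ) (hφf : ∀ x : A, φ (star x * x) = 0 → x = 0)
    (v e : A) (hestar : star e = e) (heidem : e * e = e) (hvv : star v * v = e) :
    v * e = v := by
  have key : star (v * e - v) * (v * e - v) = 0 := by
    rw [star_sub, star_mul, hestar]
    simp only [mul_sub, sub_mul]
    rw [mul_assoc e (star v) (v * e), ← mul_assoc (star v) v e, hvv,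
      mul_assoc e (star v) v, hvv]
    simp [heidem]
  have := hφf _ (by rw [key, map_zero])
  rwa [sub_eq_zero] at this

end Aux

theorem lemma_unit {H : Type*} [NormedAddCommGroup H]
    [InnerProductSpace ℂ H] [CompleteSpace H]
    (Γ : Set ℝ)
    -- `Γ` is a multiplicative subgroup of the strictly positive reals
    (hΓpos : ∀ γ ∈ Γ, (0 : ℝ) < γ) (hΓone : (1 : ℝ) ∈ Γ)
    (hΓmul : ∀ γ ∈ Γ, ∀ γ' ∈ Γ, γ * γ' ∈ Γ) (hΓinv : ∀ γ ∈ Γ, γ⁻¹ ∈ Γ)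
    (M : VonNeumannAlgebra H) (φ : M →ₗ[ℂ] ℂ) (hφ : IsState φ) (hφf : IsFaithfulPosMap φ)
    (hstable : IsGammaStable Γ φ) :
    ∀ γ ∈ Γ, ∃ (m : ℕ) (w : Fin m → M),
      -- the `w j` are partial isometries
      (∀ j, w j * star (w j) * w j = w j) ∧
      (∑ j, star (w j) * w j) = 1 ∧
      ∀ j, StateCommutes φ γ (w j) := by
  intro γ hγ
  have hγpos := hΓpos γ hγ
  set n := ⌈γ⌉₊ with hn
  have hn0 : 0 < n := Nat.ceil_pos.mpr hγpos
  have hnR : (0:ℝ) < (n : ℝ) := by exact_mod_cast hn0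
  have hinv : γ⁻¹ ∈ Γ := hΓinv γ hγ
  obtain ⟨v, e, ⟨hestar, heidem⟩, hsum, hφe, hvv, hcomm⟩ :=
    hstable n (γ / n) (fun _ => γ⁻¹) (div_pos hγpos hnR)
      (by rw [div_le_one hnR]; exact Nat.le_ceil γ)
      (fun _ => hinv)
      (by
        rw [Finset.sum_const, Finset.card_univ, Fintype.card_fin, nsmul_eq_mul]
        field_simp)
  have hst := fun y => state_star_aux φ hφ.2 y
  have hve : ∀ j, v j * e = v j := fun j => ve_eq_v_aux φ hφf _ e hestar heidem (hvv j)
  refine ⟨n, fun j => star (v j), ?_, ?_, ?_⟩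
  · intro j
    simp only [star_star]
    rw [hvv j]
    have h2 : e * star (v j) = star (v j * e) := by rw [star_mul, hestar]
    rw [h2, hve j]
  · simp only [star_star]
    exact hsum
  · intro j
    have h := commutes_star_aux φ hst γ⁻¹ (inv_ne_zero (ne_of_gt hγpos)) (v j) (hcomm j)
    rwa [inv_inv] at h
end
end
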